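/- If f ∈ C^{2,2}([0,1]²) ∩ C^{1,1}([0,1]²), then for all n, m ≥ j ≥ 2 and (x,y) ∈ [0,1]², |f(x,y) − B_{n,m,j}(f;x,y)| ≤ x(1−x)/(2n) ‖f^{(2,0)}‖ + y(1−y)/(2m) ‖f^{(0,2)}‖ + ((j−1)/n) ‖f^{(1,0)}‖ + ((j−1)/m) ‖f^{(0,1)}‖. -/

import Mathlib

open Set Finset

/-- Bernstein basis polynomial `p_{n,k}(x) = C(n,k) x^k (1-x)^{n-k}`. -/
noncomputable def bp (n k : ℕ) (x : ℝ) : ℝ :=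
  (n.choose k : ℝ) * x ^ k * (1 - x) ^ (n - k)

/-- AKR node `t_{n,k}^j = (k(k-1)⋯(k-j+1)/(n(n-1)⋯(n-j+1)))^{1/j}`. -/
noncomputable def akrNode (n j k : ℕ) : ℝ :=
  ((∏ i ∈ Finset.range j, ((k : ℝ) - i)) / (∏ i ∈ Finset.range j, ((n : ℝ) - i))) ^ ((j : ℝ)⁻¹)

/-- Classical Bernstein operator. -/
noncomputable def bern (n : ℕ) (f : ℝ → ℝ) (x : ℝ) : ℝ :=
  ∑ k ∈ Finset.range (n + 1), f ((k : ℝ) / n) * bp n k x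

/-- Aldaz–Kounchev–Render operator. -/
noncomputable def akr (n j : ℕ) (f : ℝ → ℝ) (x : ℝ) : ℝ :=
  ∑ k ∈ Finset.range (n + 1), f (akrNode n j k) * bp n k x

/-- Bivariate tensor-product Bernstein operator. -/
noncomputable def bern2 (n m : ℕ) (f : ℝ → ℝ → ℝ) (x y : ℝ) : ℝ :=
  ∑ i ∈ Finset.range (n + 1), ∑ k ∈ Finset.range (m + 1),
    f ((i : ℝ) / n) ((k : ℝ) / m) * bp n i x * bp m k y

/-- Bivariate tensor-product AKR operator. -/
noncomputable def akr2 (n m j : ℕ) (f : ℝ → ℝ → ℝ) (x y : ℝ) : ℝ :=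
  ∑ i ∈ Finset.range (n + 1), ∑ k ∈ Finset.range (m + 1),
    f (akrNode n j i) (akrNode m j k) * bp n i x * bp m k y

lemma bp_eq (n k : ℕ) (x : ℝ) :
    bp n k x = Polynomial.eval x (bernsteinPolynomial ℝ n k) := by
  simp [bp, bernsteinPolynomial]

lemma bp_sum (n : ℕ) (x : ℝ) : ∑ k ∈ range (n + 1), bp n k x = 1 := by
  have := congrArg (Polynomial.eval x) (bernsteinPolynomial.sum ℝ n)
  simpa [bp_eq, Polynomial.eval_finset_sum] using this

lemma bp_sum_smul (n : ℕ) (x : ℝ) :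
    ∑ k ∈ range (n + 1), (k : ℝ) * bp n k x = n * x := by
  have := congrArg (Polynomial.eval x) (bernsteinPolynomial.sum_smul ℝ n)
  simpa [bp_eq, Polynomial.eval_finset_sum, nsmul_eq_mul] using this

lemma bp_sum_mul_smul (n : ℕ) (x : ℝ) :
    ∑ k ∈ range (n + 1), ((k : ℝ) * ((k : ℝ) - 1)) * bp n k x = n * (n - 1) * x ^ 2 := by
  have := congrArg (Polynomial.eval x) (bernsteinPolynomial.sum_mul_smul ℝ n)
  simp only [Polynomial.eval_finset_sum, nsmul_eq_mul, Polynomial.eval_mul, Polynomial.eval_pow,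
    Polynomial.eval_natCast, Polynomial.eval_X] at this
  have hc : ∀ k : ℕ, ((k * (k - 1) : ℕ) : ℝ) = (k : ℝ) * ((k : ℝ) - 1) := by
    intro k
    rcases Nat.eq_zero_or_pos k with h | h
    · simp [h]
    · push_cast [Nat.cast_sub h]; ring
  simp only [hc] at this
  simpa [bp_eq] using this

lemma bp_nonneg (n k : ℕ) {x : ℝ} (hx : x ∈ Icc (0:ℝ) 1) : 0 ≤ bp n k x := by
  obtain ⟨h0, h1⟩ := hx
  have h2 : (0:ℝ) ≤ 1 - x := by linarith
  unfold bp
  positivity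

lemma bp_variance {n : ℕ} (hn : 1 ≤ n) (x : ℝ) :
    ∑ k ∈ range (n + 1), ((k : ℝ) / n - x) ^ 2 * bp n k x = x * (1 - x) / n := by
  have hn0 : (n : ℝ) ≠ 0 := Nat.cast_ne_zero.2 (by omega)
  have key : ∑ k ∈ range (n + 1), ((k : ℝ) / n - x) ^ 2 * bp n k x =
      (1 / n ^ 2) * (∑ k ∈ range (n + 1), ((k : ℝ) * ((k : ℝ) - 1)) * bp n k x)
      + (1 / n ^ 2 - 2 * x / n) * (∑ k ∈ range (n + 1), (k : ℝ) * bp n k x)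
      + x ^ 2 * (∑ k ∈ range (n + 1), bp n k x) := by
    rw [mul_sum, mul_sum, mul_sum, ← sum_add_distrib, ← sum_add_distrib]
    refine sum_congr rfl fun k _ => ?_
    field_simp
    ring
  rw [key, bp_sum, bp_sum_smul, bp_sum_mul_smul]
  field_simp
  ring

lemma akrNode_eq_zero {n j k : ℕ} (hj : 1 ≤ j) (hk : k < j) : akrNode n j k = 0 := by
  unfold akrNode
  rw [Finset.prod_eq_zero (Finset.mem_range.2 hk) (by simp)]
  rw [zero_div, Real.zero_rpow]
  simp only [ne_eq, inv_eq_zero, Nat.cast_eq_zero]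
  omega

lemma akrNode_bounds {n j k : ℕ} (hj : 2 ≤ j) (hjn : j ≤ n) (hjk : j ≤ k) (hk : k ≤ n) :
    ((k : ℝ) - (j : ℝ) + 1) / n ≤ akrNode n j k ∧ akrNode n j k ≤ (k : ℝ) / n := by
  have hn0 : (0:ℝ) < n := by exact_mod_cast Nat.lt_of_lt_of_le (by omega) hjn
  have hj0 : ((j:ℝ))⁻¹ ≠ 0 := by
    simp only [ne_eq, inv_eq_zero, Nat.cast_eq_zero]; omega
  set c : ℝ := ((k : ℝ) - (j : ℝ) + 1) / n with hc
  have hc0 : 0 ≤ c := by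
    apply div_nonneg _ hn0.le
    have : (j:ℝ) ≤ (k:ℝ) := by exact_mod_cast hjk
    linarith
  have hkn : (k:ℝ) ≤ (n:ℝ) := by exact_mod_cast hk
  have hjk' : (j:ℝ) ≤ (k:ℝ) := by exact_mod_cast hjk
  have hjn' : (j:ℝ) ≤ (n:ℝ) := by exact_mod_cast hjn
  -- the ratio as a product of factors
  have hfac : ∀ i ∈ range j, (0:ℝ) < (n:ℝ) - i := by
    intro i hi
    have : (i:ℝ) < (j:ℝ) := by exact_mod_cast Finset.mem_range.1 hi
    linarith
  have hratio : (∏ i ∈ range j, ((k : ℝ) - i)) / (∏ i ∈ range j, ((n : ℝ) - i)) =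
      ∏ i ∈ range j, (((k : ℝ) - i) / ((n : ℝ) - i)) := by
    rw [Finset.prod_div_distrib]
  have hfac_lb : ∀ i ∈ range j, c ≤ ((k : ℝ) - i) / ((n : ℝ) - i) := by
    intro i hi
    have hij : (i:ℝ) ≤ (j:ℝ) - 1 := by
      have : i + 1 ≤ j := Finset.mem_range.1 hi
      have : (i:ℝ) + 1 ≤ (j:ℝ) := by exact_mod_cast this
      linarith
    rw [hc, div_le_div_iff₀ hn0 (hfac i hi)]
    have hi0 : (0:ℝ) ≤ i := Nat.cast_nonneg i
    nlinarith
  have hfac_ub : ∀ i ∈ range j, ((k : ℝ) - i) / ((n : ℝ) - i) ≤ (k:ℝ) / n := by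
    intro i hi
    rw [div_le_div_iff₀ (hfac i hi) hn0]
    have hi0 : (0:ℝ) ≤ i := Nat.cast_nonneg i
    nlinarith
  have hfac_nn : ∀ i ∈ range j, (0:ℝ) ≤ ((k : ℝ) - i) / ((n : ℝ) - i) := fun i hi =>
    le_trans hc0 (hfac_lb i hi)
  have hprod_lb : c ^ j ≤ ∏ i ∈ range j, (((k : ℝ) - i) / ((n : ℝ) - i)) := by
    calc c ^ j = ∏ _i ∈ range j, c := by rw [Finset.prod_const, Finset.card_range]
    _ ≤ _ := Finset.prod_le_prod (fun i _ => hc0) hfac_lb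
  have hprod_ub : (∏ i ∈ range j, (((k : ℝ) - i) / ((n : ℝ) - i))) ≤ ((k:ℝ)/n) ^ j := by
    calc (∏ i ∈ range j, (((k : ℝ) - i) / ((n : ℝ) - i))) ≤ ∏ _i ∈ range j, ((k:ℝ)/n) :=
      Finset.prod_le_prod hfac_nn hfac_ub
    _ = ((k:ℝ)/n) ^ j := by rw [Finset.prod_const, Finset.card_range]
  have hpow : ∀ a : ℝ, 0 ≤ a → (a ^ j) ^ ((j:ℝ)⁻¹) = a := by
    intro a ha
    rw [← Real.rpow_natCast a j, ← Real.rpow_mul ha, mul_inv_cancel₀ (by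
      simp only [ne_eq, Nat.cast_eq_zero]; omega), Real.rpow_one]
  have hkn0 : (0:ℝ) ≤ (k:ℝ)/n := by positivity
  unfold akrNode
  rw [hratio]
  constructor
  · rw [← hpow c hc0]
    exact Real.rpow_le_rpow (by positivity) hprod_lb (by positivity)
  · rw [← hpow ((k:ℝ)/n) hkn0]
    exact Real.rpow_le_rpow (le_trans (by positivity) hprod_lb) hprod_ub (by positivity)

lemma akrNode_facts {n j k : ℕ} (hj : 2 ≤ j) (hjn : j ≤ n) (hk : k ≤ n) :
    akrNode n j k ∈ Icc (0:ℝ) 1 ∧ |(k:ℝ)/n - akrNode n j k| ≤ ((j:ℝ) - 1)/n := by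
  have hn0 : (0:ℝ) < n := by exact_mod_cast Nat.lt_of_lt_of_le (by omega) hjn
  have hkn : (k:ℝ) ≤ (n:ℝ) := by exact_mod_cast hk
  have hkdiv : (k:ℝ)/n ≤ 1 := by rw [div_le_one hn0]; exact hkn
  have hk0 : (0:ℝ) ≤ (k:ℝ)/n := by positivity
  rcases lt_or_ge k j with h | h
  · rw [akrNode_eq_zero (by omega) h]
    have hkj : (k:ℝ) ≤ (j:ℝ) - 1 := by
      have : (k:ℝ) + 1 ≤ (j:ℝ) := by exact_mod_cast h
      linarith
    refine ⟨⟨le_refl 0, zero_le_one⟩, ?_⟩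
    rw [sub_zero, abs_of_nonneg hk0]
    gcongr
  · obtain ⟨hlb, hub⟩ := akrNode_bounds hj hjn h hk
    have hc0 : (0:ℝ) ≤ ((k : ℝ) - (j : ℝ) + 1) / n := by
      apply div_nonneg _ hn0.le
      have : (j:ℝ) ≤ (k:ℝ) := by exact_mod_cast h
      linarith
    refine ⟨⟨le_trans hc0 hlb, le_trans hub hkdiv⟩, ?_⟩
    rw [abs_of_nonneg (by linarith)]
    have : (k:ℝ)/n - ((k : ℝ) - (j : ℝ) + 1) / n = ((j:ℝ) - 1)/n := by
      field_simp; ring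
    linarith

lemma lip_of_deriv {g g1 : ℝ → ℝ}
    (hg : ∀ s ∈ Icc (0:ℝ) 1, HasDerivWithinAt g (g1 s) (Icc 0 1) s)
    {M : ℝ} (hM : ∀ s ∈ Icc (0:ℝ) 1, |g1 s| ≤ M)
    {a b : ℝ} (ha : a ∈ Icc (0:ℝ) 1) (hb : b ∈ Icc (0:ℝ) 1) :
    |g b - g a| ≤ M * |b - a| := by
  have := (convex_Icc (0:ℝ) 1).norm_image_sub_le_of_norm_hasDerivWithin_le hg
    (fun s hs => by rw [Real.norm_eq_abs]; exact hM s hs) ha hb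
  simpa [Real.norm_eq_abs] using this

lemma quad_taylor {g g1 g2 : ℝ → ℝ}
    (hg : ∀ s ∈ Icc (0:ℝ) 1, HasDerivWithinAt g (g1 s) (Icc 0 1) s)
    (hg1 : ∀ s ∈ Icc (0:ℝ) 1, HasDerivWithinAt g1 (g2 s) (Icc 0 1) s)
    {M : ℝ} (hM : ∀ s ∈ Icc (0:ℝ) 1, |g2 s| ≤ M)
    {x t : ℝ} (hx : x ∈ Icc (0:ℝ) 1) (ht : t ∈ Icc (0:ℝ) 1) :
    |g t - g x - g1 x * (t - x)| ≤ M / 2 * (t - x) ^ 2 := by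
  have hcont1 : ContinuousOn g1 (Icc (0:ℝ) 1) := fun s hs =>
    (hg1 s hs).continuousWithinAt
  have hlip : ∀ a ∈ Icc (0:ℝ) 1, ∀ b ∈ Icc (0:ℝ) 1, |g1 b - g1 a| ≤ M * |b - a| :=
    fun a ha b hb => lip_of_deriv hg1 hM ha hb
  have key : ∀ a b : ℝ, a ≤ b → a ∈ Icc (0:ℝ) 1 → b ∈ Icc (0:ℝ) 1 →
      (∫ s in a..b, g1 s) = g b - g a := by
    intro a b hab ha hb
    have hsub : Icc a b ⊆ Icc (0:ℝ) 1 := Icc_subset_Icc ha.1 hb.2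
    apply intervalIntegral.integral_eq_sub_of_hasDeriv_right_of_le hab
    · exact fun s hs => ((hg s (hsub hs)).continuousWithinAt).mono hsub
    · intro s hs
      have hs' : s ∈ Ioo (0:ℝ) 1 := ⟨lt_of_le_of_lt ha.1 hs.1, lt_of_lt_of_le hs.2 hb.2⟩
      have : HasDerivAt g (g1 s) s :=
        (hg s (hsub (Ioo_subset_Icc_self hs))).hasDerivAt
          (Icc_mem_nhds hs'.1 hs'.2)
      exact this.hasDerivWithinAt
    · apply ContinuousOn.intervalIntegrable
      rw [uIcc_of_le hab]
      exact hcont1.mono hsub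
  have calc_int : ∀ a b c : ℝ, (∫ s in a..b, (c * (s - a))) = c * (b - a) ^ 2 / 2 := by
    intro a b c
    rw [intervalIntegral.integral_const_mul,
      intervalIntegral.integral_sub ((continuous_id').intervalIntegrable _ _)
        intervalIntegrable_const,
      integral_id, intervalIntegral.integral_const]
    simp only [smul_eq_mul, id]
    ring
  have calc_int2 : ∀ a b c : ℝ, (∫ s in a..b, (c * (b - s))) = c * (b - a) ^ 2 / 2 := by
    intro a b c
    have : (∫ s in a..b, (c * (b - s))) = ∫ s in a..b, (c * b - c * s) := by
      congr 1; funext s; ring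
    rw [this, intervalIntegral.integral_sub (g := fun s => c * s) intervalIntegrable_const
        ((continuous_const.mul continuous_id').intervalIntegrable _ _),
      intervalIntegral.integral_const, intervalIntegral.integral_const_mul, integral_id]
    simp only [smul_eq_mul, id]
    ring
  rcases le_total x t with hxt | htx
  · have hsub : Icc x t ⊆ Icc (0:ℝ) 1 := Icc_subset_Icc hx.1 ht.2
    have hcsub : ContinuousOn (fun s => |g1 s - g1 x|) (Icc x t) :=
      ((hcont1.mono hsub).sub continuousOn_const).abs
    have hint1 : IntervalIntegrable g1 MeasureTheory.volume x t := by
      apply ContinuousOn.intervalIntegrable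
      rw [uIcc_of_le hxt]
      exact hcont1.mono hsub
    have hintabs : IntervalIntegrable (fun s => |g1 s - g1 x|) MeasureTheory.volume x t := by
      apply ContinuousOn.intervalIntegrable
      rw [uIcc_of_le hxt]
      exact hcsub
    have hintM : IntervalIntegrable (fun s => M * (s - x)) MeasureTheory.volume x t :=
      (continuous_const.mul (continuous_id.sub continuous_const)).intervalIntegrable _ _
    have heq : g t - g x - g1 x * (t - x) = ∫ s in x..t, (g1 s - g1 x) := by
      rw [intervalIntegral.integral_sub hint1 intervalIntegrable_const,
        key x t hxt hx ht, intervalIntegral.integral_const]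
      simp only [smul_eq_mul]
      ring
    rw [heq]
    calc |∫ s in x..t, (g1 s - g1 x)| ≤ ∫ s in x..t, |g1 s - g1 x| := by
          simpa [Real.norm_eq_abs] using
            intervalIntegral.norm_integral_le_integral_norm (f := fun s => g1 s - g1 x)
              (μ := MeasureTheory.volume) hxt
    _ ≤ ∫ s in x..t, (M * (s - x)) := by
          apply intervalIntegral.integral_mono_on hxt hintabs hintM
          intro s hs
          have hs' : s ∈ Icc (0:ℝ) 1 := hsub hs
          calc |g1 s - g1 x| ≤ M * |s - x| := hlip x hx s hs'
          _ = M * (s - x) := by rw [abs_of_nonneg (by linarith [hs.1])]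
    _ = M * (t - x) ^ 2 / 2 := calc_int x t M
    _ = M / 2 * (t - x) ^ 2 := by ring
  · have hsub : Icc t x ⊆ Icc (0:ℝ) 1 := Icc_subset_Icc ht.1 hx.2
    have hcsub : ContinuousOn (fun s => |g1 x - g1 s|) (Icc t x) :=
      (continuousOn_const.sub (hcont1.mono hsub)).abs
    have hint1 : IntervalIntegrable g1 MeasureTheory.volume t x := by
      apply ContinuousOn.intervalIntegrable
      rw [uIcc_of_le htx]
      exact hcont1.mono hsub
    have hintabs : IntervalIntegrable (fun s => |g1 x - g1 s|) MeasureTheory.volume t x := by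
      apply ContinuousOn.intervalIntegrable
      rw [uIcc_of_le htx]
      exact hcsub
    have hintM : IntervalIntegrable (fun s => M * (x - s)) MeasureTheory.volume t x :=
      (continuous_const.mul (continuous_const.sub continuous_id)).intervalIntegrable _ _
    have heq : g t - g x - g1 x * (t - x) = ∫ s in t..x, (g1 x - g1 s) := by
      rw [intervalIntegral.integral_sub intervalIntegrable_const hint1,
        key t x htx ht hx, intervalIntegral.integral_const]
      simp only [smul_eq_mul]
      ring
    rw [heq]
    calc |∫ s in t..x, (g1 x - g1 s)| ≤ ∫ s in t..x, |g1 x - g1 s| := by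
          simpa [Real.norm_eq_abs] using
            intervalIntegral.norm_integral_le_integral_norm (f := fun s => g1 x - g1 s)
              (μ := MeasureTheory.volume) htx
    _ ≤ ∫ s in t..x, (M * (x - s)) := by
          apply intervalIntegral.integral_mono_on htx hintabs hintM
          intro s hs
          have hs' : s ∈ Icc (0:ℝ) 1 := hsub hs
          rw [abs_sub_comm]
          calc |g1 s - g1 x| ≤ M * |s - x| := hlip x hx s hs'
          _ = M * (x - s) := by rw [abs_of_nonpos (by linarith [hs.2]), neg_sub]
    _ = M * (x - t) ^ 2 / 2 := calc_int2 t x M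
    _ = M / 2 * (t - x) ^ 2 := by ring

lemma akr_est (n j : ℕ) (hj : 2 ≤ j) (hn : j ≤ n) {g g1 g2 : ℝ → ℝ}
    (hg : ∀ s ∈ Icc (0:ℝ) 1, HasDerivWithinAt g (g1 s) (Icc 0 1) s)
    (hg1 : ∀ s ∈ Icc (0:ℝ) 1, HasDerivWithinAt g1 (g2 s) (Icc 0 1) s)
    {M1 M2 : ℝ}
    (hM1 : ∀ s ∈ Icc (0:ℝ) 1, |g1 s| ≤ M1) (hM2 : ∀ s ∈ Icc (0:ℝ) 1, |g2 s| ≤ M2)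
    {x : ℝ} (hx : x ∈ Icc (0:ℝ) 1) :
    |g x - akr n j g x| ≤ x * (1 - x) / (2 * n) * M2 + ((j:ℝ) - 1)/n * M1 := by
  have hn1 : 1 ≤ n := by omega
  have hn0 : (0:ℝ) < n := by exact_mod_cast Nat.lt_of_lt_of_le (by omega) hn
  have hM1nn : 0 ≤ M1 := le_trans (abs_nonneg _) (hM1 0 (by norm_num))
  have hnode : ∀ k ∈ range (n+1), akrNode n j k ∈ Icc (0:ℝ) 1 ∧
      |(k:ℝ)/n - akrNode n j k| ≤ ((j:ℝ) - 1)/n := fun k hk =>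
    akrNode_facts hj hn (by have := Finset.mem_range.1 hk; omega)
  have hkn : ∀ k ∈ range (n+1), ((k:ℝ)/n) ∈ Icc (0:ℝ) 1 := by
    intro k hk
    have hkle : (k:ℝ) ≤ (n:ℝ) := by
      exact_mod_cast Nat.le_of_lt_succ (Finset.mem_range.1 hk)
    constructor
    · positivity
    · rw [div_le_one hn0]; exact hkle
  have hzero : ∑ k ∈ range (n+1), g1 x * ((k:ℝ)/n - x) * bp n k x = 0 := by
    have h1 := bp_sum n x
    have h2 := bp_sum_smul n x
    have e : ∑ k ∈ range (n+1), g1 x * ((k:ℝ)/n - x) * bp n k x =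
        (g1 x / n) * (∑ k ∈ range (n+1), (k:ℝ) * bp n k x)
        - (g1 x * x) * (∑ k ∈ range (n+1), bp n k x) := by
      rw [mul_sum, mul_sum, ← Finset.sum_sub_distrib]
      refine sum_congr rfl fun k _ => ?_
      field_simp
    rw [e, h1, h2]
    field_simp
    ring
  have main_eq : g x - akr n j g x = ∑ k ∈ range (n+1),
      (-(g ((k:ℝ)/n) - g x - g1 x * ((k:ℝ)/n - x)) - (g (akrNode n j k) - g ((k:ℝ)/n)))
        * bp n k x := by
    have e : ∀ k : ℕ, (-(g ((k:ℝ)/n) - g x - g1 x * ((k:ℝ)/n - x))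
          - (g (akrNode n j k) - g ((k:ℝ)/n))) * bp n k x
        = (g x * bp n k x - g (akrNode n j k) * bp n k x)
          + g1 x * ((k:ℝ)/n - x) * bp n k x := fun k => by ring
    unfold akr
    rw [Finset.sum_congr rfl (fun k _ => e k), Finset.sum_add_distrib, hzero,
      Finset.sum_sub_distrib, ← Finset.mul_sum, bp_sum]
    ring
  rw [main_eq]
  have hbound : ∀ k ∈ range (n+1),
      |(-(g ((k:ℝ)/n) - g x - g1 x * ((k:ℝ)/n - x)) - (g (akrNode n j k) - g ((k:ℝ)/n)))
        * bp n k x|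
      ≤ (M2 / 2 * ((k:ℝ)/n - x) ^ 2 + M1 * (((j:ℝ) - 1)/n)) * bp n k x := by
    intro k hk
    rw [abs_mul, abs_of_nonneg (bp_nonneg n k hx)]
    apply mul_le_mul_of_nonneg_right _ (bp_nonneg n k hx)
    calc |(-(g ((k:ℝ)/n) - g x - g1 x * ((k:ℝ)/n - x)) - (g (akrNode n j k) - g ((k:ℝ)/n)))|
        ≤ |g ((k:ℝ)/n) - g x - g1 x * ((k:ℝ)/n - x)| + |g (akrNode n j k) - g ((k:ℝ)/n)| := by
          rw [← abs_neg (g ((k:ℝ)/n) - g x - g1 x * ((k:ℝ)/n - x))]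
          exact abs_sub _ _
    _ ≤ M2 / 2 * ((k:ℝ)/n - x) ^ 2 + M1 * (((j:ℝ) - 1)/n) := by
        apply add_le_add
        · exact quad_taylor hg hg1 hM2 hx (hkn k hk)
        · calc |g (akrNode n j k) - g ((k:ℝ)/n)|
              ≤ M1 * |akrNode n j k - (k:ℝ)/n| :=
                lip_of_deriv hg hM1 (hkn k hk) (hnode k hk).1
          _ ≤ M1 * (((j:ℝ) - 1)/n) := by
              apply mul_le_mul_of_nonneg_left _ hM1nn
              rw [abs_sub_comm]
              exact (hnode k hk).2
  calc |∑ k ∈ range (n+1),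
      (-(g ((k:ℝ)/n) - g x - g1 x * ((k:ℝ)/n - x)) - (g (akrNode n j k) - g ((k:ℝ)/n)))
        * bp n k x|
      ≤ ∑ k ∈ range (n+1),
        |(-(g ((k:ℝ)/n) - g x - g1 x * ((k:ℝ)/n - x)) - (g (akrNode n j k) - g ((k:ℝ)/n)))
          * bp n k x| := Finset.abs_sum_le_sum_abs _ _
  _ ≤ ∑ k ∈ range (n+1), (M2 / 2 * ((k:ℝ)/n - x) ^ 2 + M1 * (((j:ℝ) - 1)/n)) * bp n k x :=
      Finset.sum_le_sum hbound
  _ = M2 / 2 * (∑ k ∈ range (n+1), ((k:ℝ)/n - x) ^ 2 * bp n k x)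
      + M1 * (((j:ℝ) - 1)/n) * (∑ k ∈ range (n+1), bp n k x) := by
      rw [mul_sum, mul_sum, ← Finset.sum_add_distrib]
      refine sum_congr rfl fun k _ => ?_
      ring
  _ = x * (1 - x) / (2 * n) * M2 + ((j:ℝ) - 1)/n * M1 := by
      rw [bp_variance hn1, bp_sum]
      field_simp

lemma bdd_abs {g : ℝ → ℝ → ℝ}
    (hg : ContinuousOn (fun p : ℝ × ℝ => g p.1 p.2) (Set.Icc (0:ℝ) 1 ×ˢ Set.Icc (0:ℝ) 1)) :
    BddAbove (Set.range fun p : Set.Icc (0:ℝ) 1 × Set.Icc (0:ℝ) 1 => |g p.1 p.2|) := by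
  have hmap : Continuous (fun p : Set.Icc (0:ℝ) 1 × Set.Icc (0:ℝ) 1 => ((p.1 : ℝ), (p.2 : ℝ))) :=
    (continuous_subtype_val.comp continuous_fst).prodMk
      (continuous_subtype_val.comp continuous_snd)
  have hcont : Continuous (fun p : Set.Icc (0:ℝ) 1 × Set.Icc (0:ℝ) 1 => |g p.1 p.2|) := by
    have := hg.comp_continuous hmap (fun p => Set.mk_mem_prod p.1.2 p.2.2)
    exact this.abs
  exact (isCompact_range hcont).bddAbove

theorem stmt18 (n m j : ℕ) (hj : 2 ≤ j) (hn : j ≤ n) (hm : j ≤ m)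
    (f fx fy fxx fyy : ℝ → ℝ → ℝ)
    (hfx : ∀ y ∈ Icc (0:ℝ) 1, ∀ x ∈ Icc (0:ℝ) 1,
      HasDerivWithinAt (fun u => f u y) (fx x y) (Icc 0 1) x)
    (hfxx : ∀ y ∈ Icc (0:ℝ) 1, ∀ x ∈ Icc (0:ℝ) 1,
      HasDerivWithinAt (fun u => fx u y) (fxx x y) (Icc 0 1) x)
    (hfy : ∀ x ∈ Icc (0:ℝ) 1, ∀ y ∈ Icc (0:ℝ) 1,
      HasDerivWithinAt (fun v => f x v) (fy x y) (Icc 0 1) y)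
    (hfyy : ∀ x ∈ Icc (0:ℝ) 1, ∀ y ∈ Icc (0:ℝ) 1,
      HasDerivWithinAt (fun v => fy x v) (fyy x y) (Icc 0 1) y)
    (hcx : ContinuousOn (fun p : ℝ × ℝ => fx p.1 p.2) (Set.Icc (0:ℝ) 1 ×ˢ Set.Icc (0:ℝ) 1))
    (hcy : ContinuousOn (fun p : ℝ × ℝ => fy p.1 p.2) (Set.Icc (0:ℝ) 1 ×ˢ Set.Icc (0:ℝ) 1))
    (hcxx : ContinuousOn (fun p : ℝ × ℝ => fxx p.1 p.2) (Set.Icc (0:ℝ) 1 ×ˢ Set.Icc (0:ℝ) 1))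
    (hcyy : ContinuousOn (fun p : ℝ × ℝ => fyy p.1 p.2) (Set.Icc (0:ℝ) 1 ×ˢ Set.Icc (0:ℝ) 1)) :
    ∀ x ∈ Icc (0:ℝ) 1, ∀ y ∈ Icc (0:ℝ) 1,
      |f x y - akr2 n m j f x y| ≤
        x * (1 - x) / (2 * n) *
            (⨆ p : Set.Icc (0:ℝ) 1 × Set.Icc (0:ℝ) 1, |fxx p.1 p.2|) +
          y * (1 - y) / (2 * m) *
            (⨆ p : Set.Icc (0:ℝ) 1 × Set.Icc (0:ℝ) 1, |fyy p.1 p.2|) +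
          (((j : ℝ) - 1) / n) *
            (⨆ p : Set.Icc (0:ℝ) 1 × Set.Icc (0:ℝ) 1, |fx p.1 p.2|) +
          (((j : ℝ) - 1) / m) *
            (⨆ p : Set.Icc (0:ℝ) 1 × Set.Icc (0:ℝ) 1, |fy p.1 p.2|) := by
  intro x hx y hy
  set Mx : ℝ := ⨆ p : Set.Icc (0:ℝ) 1 × Set.Icc (0:ℝ) 1, |fx p.1 p.2| with hMx_def
  set My : ℝ := ⨆ p : Set.Icc (0:ℝ) 1 × Set.Icc (0:ℝ) 1, |fy p.1 p.2| with hMy_def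
  set Mxx : ℝ := ⨆ p : Set.Icc (0:ℝ) 1 × Set.Icc (0:ℝ) 1, |fxx p.1 p.2| with hMxx_def
  set Myy : ℝ := ⨆ p : Set.Icc (0:ℝ) 1 × Set.Icc (0:ℝ) 1, |fyy p.1 p.2| with hMyy_def
  have hMx : ∀ a ∈ Icc (0:ℝ) 1, ∀ b ∈ Icc (0:ℝ) 1, |fx a b| ≤ Mx := fun a ha b hb =>
    le_ciSup (bdd_abs hcx) (⟨⟨a, ha⟩, ⟨b, hb⟩⟩ : Set.Icc (0:ℝ) 1 × Set.Icc (0:ℝ) 1)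
  have hMy : ∀ a ∈ Icc (0:ℝ) 1, ∀ b ∈ Icc (0:ℝ) 1, |fy a b| ≤ My := fun a ha b hb =>
    le_ciSup (bdd_abs hcy) (⟨⟨a, ha⟩, ⟨b, hb⟩⟩ : Set.Icc (0:ℝ) 1 × Set.Icc (0:ℝ) 1)
  have hMxx : ∀ a ∈ Icc (0:ℝ) 1, ∀ b ∈ Icc (0:ℝ) 1, |fxx a b| ≤ Mxx := fun a ha b hb =>
    le_ciSup (bdd_abs hcxx) (⟨⟨a, ha⟩, ⟨b, hb⟩⟩ : Set.Icc (0:ℝ) 1 × Set.Icc (0:ℝ) 1)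
  have hMyy : ∀ a ∈ Icc (0:ℝ) 1, ∀ b ∈ Icc (0:ℝ) 1, |fyy a b| ≤ Myy := fun a ha b hb =>
    le_ciSup (bdd_abs hcyy) (⟨⟨a, ha⟩, ⟨b, hb⟩⟩ : Set.Icc (0:ℝ) 1 × Set.Icc (0:ℝ) 1)
  have hnode : ∀ i ∈ range (n+1), akrNode n j i ∈ Icc (0:ℝ) 1 := fun i hi =>
    (akrNode_facts hj hn (by have := Finset.mem_range.1 hi; omega)).1
  -- decomposition
  have hB : ∑ i ∈ range (n+1),
      (akr m j (fun v => f (akrNode n j i) v) y) * bp n i x = akr2 n m j f x y := by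
    unfold akr2 akr
    refine sum_congr rfl fun i _ => ?_
    rw [Finset.sum_mul]
    exact sum_congr rfl fun k _ => by ring
  have split : f x y - akr2 n m j f x y =
      (f x y - akr n j (fun u => f u y) x)
      + ∑ i ∈ range (n+1),
          (f (akrNode n j i) y - akr m j (fun v => f (akrNode n j i) v) y) * bp n i x := by
    have e : ∑ i ∈ range (n+1),
        (f (akrNode n j i) y - akr m j (fun v => f (akrNode n j i) v) y) * bp n i x
        = ∑ i ∈ range (n+1), f (akrNode n j i) y * bp n i x
          - ∑ i ∈ range (n+1), (akr m j (fun v => f (akrNode n j i) v) y) * bp n i x := by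
      rw [← Finset.sum_sub_distrib]
      exact sum_congr rfl fun i _ => by ring
    rw [e, hB]
    have : akr n j (fun u => f u y) x = ∑ i ∈ range (n+1), f (akrNode n j i) y * bp n i x := rfl
    rw [this]
    ring
  rw [split]
  have part1 : |f x y - akr n j (fun u => f u y) x|
      ≤ x * (1 - x) / (2 * n) * Mxx + ((j:ℝ) - 1)/n * Mx :=
    akr_est n j hj hn (fun s hs => hfx y hy s hs) (fun s hs => hfxx y hy s hs)
      (fun s hs => hMx s hs y hy) (fun s hs => hMxx s hs y hy) hx
  have part2 : |∑ i ∈ range (n+1),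
      (f (akrNode n j i) y - akr m j (fun v => f (akrNode n j i) v) y) * bp n i x|
      ≤ y * (1 - y) / (2 * m) * Myy + ((j:ℝ) - 1)/m * My := by
    have hterm : ∀ i ∈ range (n+1),
        |(f (akrNode n j i) y - akr m j (fun v => f (akrNode n j i) v) y) * bp n i x|
        ≤ (y * (1 - y) / (2 * m) * Myy + ((j:ℝ) - 1)/m * My) * bp n i x := by
      intro i hi
      rw [abs_mul, abs_of_nonneg (bp_nonneg n i hx)]
      apply mul_le_mul_of_nonneg_right _ (bp_nonneg n i hx)
      have hti := hnode i hi
      exact akr_est m j hj hm (fun s hs => hfy _ hti s hs) (fun s hs => hfyy _ hti s hs)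
        (fun s hs => hMy _ hti s hs) (fun s hs => hMyy _ hti s hs) hy
    calc |∑ i ∈ range (n+1),
        (f (akrNode n j i) y - akr m j (fun v => f (akrNode n j i) v) y) * bp n i x|
        ≤ ∑ i ∈ range (n+1),
          |(f (akrNode n j i) y - akr m j (fun v => f (akrNode n j i) v) y) * bp n i x| :=
          Finset.abs_sum_le_sum_abs _ _
    _ ≤ ∑ i ∈ range (n+1),
          (y * (1 - y) / (2 * m) * Myy + ((j:ℝ) - 1)/m * My) * bp n i x :=
          Finset.sum_le_sum hterm
    _ = y * (1 - y) / (2 * m) * Myy + ((j:ℝ) - 1)/m * My := by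
          rw [← Finset.mul_sum, bp_sum, mul_one]
  calc |(f x y - akr n j (fun u => f u y) x)
      + ∑ i ∈ range (n+1),
          (f (akrNode n j i) y - akr m j (fun v => f (akrNode n j i) v) y) * bp n i x|
      ≤ |f x y - akr n j (fun u => f u y) x|
        + |∑ i ∈ range (n+1),
            (f (akrNode n j i) y - akr m j (fun v => f (akrNode n j i) v) y) * bp n i x| :=
        abs_add_le _ _
  _ ≤ (x * (1 - x) / (2 * n) * Mxx + ((j:ℝ) - 1)/n * Mx)
      + (y * (1 - y) / (2 * m) * Myy + ((j:ℝ) - 1)/m * My) := add_le_add part1 part2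
  _ = x * (1 - x) / (2 * n) * Mxx + y * (1 - y) / (2 * m) * Myy
      + ((j:ℝ) - 1)/n * Mx + ((j:ℝ) - 1)/m * My := by ring
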